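/- arXiv:2410.00710 — 4 statements merged into one kernel-verified Lean document; each statement's English description precedes it below -/
import Mathlib

section
/- Let m ≥ 1 and let A be an invertible m×m complex matrix. The following are equivalent: (i) for every Hermitian m×m complex matrix M with trace M ≥ 0, the trace of Aᴴ·M·A is ≥ 0 (both traces are real since M and AᴴMA are Hermitian); (ii) there exists a real number a > 0 such that A·Aᴴ = a·I_m, where I_m is the m×m identity matrix. -/
open Matrix

lemma ct_std {m : ℕ} (i j : Fin m) (c : ℂ) :
    (single i j c)ᴴ = single j i (star c) := by
  ext a b
  rw [conjTranspose_apply]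
  simp only [single, of_apply, and_comm]
  split_ifs <;> simp

lemma trace_std_mul {m : ℕ} (i j : Fin m) (c : ℂ) (B : Matrix (Fin m) (Fin m) ℂ) :
    trace (single i j c * B) = c * B j i := by
  rw [trace]
  rw [Finset.sum_eq_single i]
  · simp [diag]
  · intro k _ hk
    simp [diag, single_mul_apply_of_ne (c := c) (i := i) (j := j) (a := k) (b := k) (h := hk) (M := B)]
  · simp

/-- For an invertible `m × m` complex matrix `A`, the map `M ↦ Tr(Aᴴ M A)` sends
Hermitian matrices of nonnegative trace to matrices of nonnegative trace
if and only if `A Aᴴ = a • I` for some real `a > 0`. -/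
theorem trace_nonneg_iff_scalar {m : ℕ} (hm : 1 ≤ m)
    (A : Matrix (Fin m) (Fin m) ℂ) (hA : IsUnit A) :
    (∀ M : Matrix (Fin m) (Fin m) ℂ, M.IsHermitian → 0 ≤ M.trace.re →
      0 ≤ (Aᴴ * M * A).trace.re) ↔
    ∃ a : ℝ, 0 < a ∧ A * Aᴴ = (a : ℂ) • (1 : Matrix (Fin m) (Fin m) ℂ) := by
  have hcy : ∀ M : Matrix (Fin m) (Fin m) ℂ,
      (Aᴴ * M * A).trace = (M * (A * Aᴴ)).trace := fun M =>
    (trace_mul_cycle Aᴴ M A).trans (trace_mul_comm _ M)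
  constructor
  · intro h
    set B := A * Aᴴ with hBdef
    have hBH : B.IsHermitian := isHermitian_mul_conjTranspose_self A
    have key : ∀ M : Matrix (Fin m) (Fin m) ℂ, M.IsHermitian → M.trace = 0 →
        (M * B).trace = 0 := by
      intro M hM htM
      have h1 := h M hM (by rw [htM]; simp)
      have h2 := h (-M) hM.neg (by simp [htM])
      have hH : (Aᴴ * M * A).IsHermitian := isHermitian_conjTranspose_mul_mul A hM
      have him : (Aᴴ * M * A).trace.im = 0 := by
        have := trace_conjTranspose (Aᴴ * M * A)
        rw [hH.eq] at this
        exact Complex.conj_eq_iff_im.mp this.symm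
      have h2' : (Aᴴ * M * A).trace.re ≤ 0 := by
        have hneg : (Aᴴ * (-M) * A).trace = -(Aᴴ * M * A).trace := by
          simp [Matrix.mul_assoc]
        rw [hneg] at h2
        simp at h2
        linarith
      have hre : (Aᴴ * M * A).trace.re = 0 := le_antisymm h2' h1
      rw [← hcy M]
      exact Complex.ext hre him
    classical
    set z : Fin m := ⟨0, hm⟩ with hz
    have hoff : ∀ i j : Fin m, i ≠ j → B i j = 0 := by
      intro i j hij
      have hM1 : (single i j (1 : ℂ) + single j i 1).IsHermitian := by
        rw [IsHermitian, conjTranspose_add, ct_std, ct_std]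
        simp [add_comm]
      have ht1 : (single i j (1 : ℂ) + single j i 1).trace = 0 := by
        rw [trace_add, trace_single_eq_of_ne _ _ _ hij.symm,
          trace_single_eq_of_ne _ _ _ hij]
        simp
      have e1 := key _ hM1 ht1
      rw [add_mul, trace_add, trace_std_mul, trace_std_mul] at e1
      have hM2 : (single i j (Complex.I) + single j i (-Complex.I)).IsHermitian := by
        rw [IsHermitian, conjTranspose_add, ct_std, ct_std]
        simp [add_comm]
      have ht2 : (single i j (Complex.I) + single j i (-Complex.I)).trace = 0 := by
        rw [trace_add, trace_single_eq_of_ne _ _ _ hij.symm,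
          trace_single_eq_of_ne _ _ _ hij]
        simp
      have e2 := key _ hM2 ht2
      rw [add_mul, trace_add, trace_std_mul, trace_std_mul] at e2
      linear_combination e1 / 2 + Complex.I / 2 * e2 + (B i j - B j i) / 2 * Complex.I_sq
    have hdiag : ∀ i : Fin m, B i i = B z z := by
      intro i
      by_cases hi : i = z
      · rw [hi]
      · have hM : (single i i (1 : ℂ) + single z z (-1)).IsHermitian := by
          rw [IsHermitian, conjTranspose_add, ct_std, ct_std]
          simp [add_comm]
        have ht : (single i i (1 : ℂ) + single z z (-1)).trace = 0 := by
          rw [trace_add, trace_single_eq_same, trace_single_eq_same]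
          ring
        have e := key _ hM ht
        rw [add_mul, trace_add, trace_std_mul, trace_std_mul] at e
        linear_combination e
    -- B z z is a positive real
    have hrez : (B z z).im = 0 := by
      have := hBH.apply z z
      simpa [Complex.ext_iff, Complex.conj_im, eq_comm, neg_eq_iff_add_eq_zero] using
        Complex.conj_eq_iff_im.mp this
    have hrepos : 0 ≤ (B z z).re := by
      have : B z z = ∑ k, A z k * star (A z k) := by
        simp [hBdef, Matrix.mul_apply, conjTranspose_apply]
      rw [this]
      rw [Complex.re_sum]
      apply Finset.sum_nonneg
      intro k _
      simpa [Complex.mul_conj] using Complex.normSq_nonneg (A z k)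
    have hBunit : IsUnit B := hA.mul ((isUnit_conjTranspose (A := A)).mpr hA)
    refine ⟨(B z z).re, ?_, ?_⟩
    · rcases lt_or_eq_of_le hrepos with hlt | heq
      · exact hlt
      · exfalso
        have hBzz : B z z = 0 := Complex.ext heq.symm hrez
        have hB0 : B = 0 := by
          ext i j
          by_cases hij : i = j
          · subst hij; rw [hdiag i, hBzz]; rfl
          · rw [hoff i j hij]; rfl
        rw [hB0] at hBunit
        haveI : NeZero m := ⟨by omega⟩
        exact not_isUnit_zero hBunit
    · ext i j
      by_cases hij : i = j
      · subst hij
        rw [hdiag i]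
        simp [Matrix.one_apply, Complex.ext_iff, hrez]
      · rw [hoff i j hij]
        simp [Matrix.one_apply, hij]
  · rintro ⟨a, ha, hB⟩ M hM htM
    have htr : (Aᴴ * M * A).trace = (a : ℂ) * M.trace := by
      rw [hcy, hB, Matrix.mul_smul, Matrix.mul_one, trace_smul, smul_eq_mul]
    rw [htr]
    simp only [Complex.mul_re, Complex.ofReal_re, Complex.ofReal_im, zero_mul, sub_zero]
    exact mul_nonneg ha.le htM
end

section
/- Let m ≥ 1 and let A be an m×m complex matrix. Suppose that for every Hermitian m×m complex matrix M with trace M ≥ 0, the trace of Aᴴ·M·A is ≥ 0. Then for every Hermitian m×m complex matrix M one has Tr(Aᴴ·M·A) = (1/m)·Tr(Aᴴ·A)·Tr(M). -/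
open Matrix

lemma herm_trace_im {n : ℕ} {N : Matrix (Fin n) (Fin n) ℂ} (hN : N.IsHermitian) :
    N.trace.im = 0 := by
  have : star N.trace = N.trace := by
    rw [← Matrix.trace_conjTranspose, hN.eq]
  have := congrArg Complex.im this
  simp [Complex.star_def] at this
  linarith

/-- If `M ↦ Tr(Aᴴ M A)` is nonnegative on Hermitian matrices with nonnegative trace,
then `Tr(Aᴴ M A) = (1/m) Tr(Aᴴ A) Tr(M)` for every Hermitian `M`. -/
theorem trace_identity_of_nonneg {m : ℕ} (hm : 1 ≤ m)
    (A : Matrix (Fin m) (Fin m) ℂ)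
    (h : ∀ M : Matrix (Fin m) (Fin m) ℂ, M.IsHermitian → 0 ≤ M.trace.re →
      0 ≤ (Aᴴ * M * A).trace.re) :
    ∀ M : Matrix (Fin m) (Fin m) ℂ, M.IsHermitian →
      (Aᴴ * M * A).trace = (1 / (m : ℂ)) * (Aᴴ * A).trace * M.trace := by
  intro M hM
  have hm0 : (m : ℂ) ≠ 0 := by
    exact_mod_cast Nat.cast_ne_zero.mpr (by omega)
  set c : ℂ := M.trace with hc
  have hcim : c.im = 0 := herm_trace_im hM
  set N : Matrix (Fin m) (Fin m) ℂ := M - (c / m) • 1 with hNdef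
  have hcreal : star (c / m) = c / m := by
    rw [Complex.star_def]
    apply Complex.ext <;> simp [Complex.div_im, Complex.div_re, hcim]
  have hNherm : N.IsHermitian := by
    unfold N
    apply hM.sub
    rw [Matrix.IsHermitian, Matrix.conjTranspose_smul, Matrix.conjTranspose_one, hcreal]
  have hNtr : N.trace = 0 := by
    unfold N
    rw [Matrix.trace_sub, Matrix.trace_smul, Matrix.trace_one]
    rw [Fintype.card_fin, smul_eq_mul, ← hc]
    field_simp
    ring
  have hAN : ∀ P : Matrix (Fin m) (Fin m) ℂ, P.IsHermitian → (Aᴴ * P * A).IsHermitian := by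
    intro P hP
    rw [Matrix.IsHermitian]
    simp [Matrix.mul_assoc, hP.eq]
  have h1 : 0 ≤ (Aᴴ * N * A).trace.re := h N hNherm (by rw [hNtr]; simp)
  have h2 : 0 ≤ (Aᴴ * (-N) * A).trace.re := by
    apply h (-N) hNherm.neg
    rw [Matrix.trace_neg, hNtr]; simp
  have h2' : (Aᴴ * (-N) * A).trace.re = -(Aᴴ * N * A).trace.re := by
    rw [Matrix.mul_neg, Matrix.neg_mul, Matrix.trace_neg, Complex.neg_re]
  have hre : (Aᴴ * N * A).trace.re = 0 := by rw [h2'] at h2; linarith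
  have him : (Aᴴ * N * A).trace.im = 0 := herm_trace_im (hAN N hNherm)
  have htrN : (Aᴴ * N * A).trace = 0 := Complex.ext hre him
  have hdecomp : M = N + (c / m) • 1 := by unfold N; ring_nf; abel
  calc (Aᴴ * M * A).trace
      = (Aᴴ * N * A).trace + (c / m) * (Aᴴ * A).trace := by
        rw [hdecomp]
        simp [Matrix.mul_add, Matrix.add_mul, Matrix.mul_smul, Matrix.smul_mul,
          Matrix.trace_add, Matrix.trace_smul, smul_eq_mul]
    _ = (1 / (m : ℂ)) * (Aᴴ * A).trace * M.trace := by
        rw [htrN, zero_add, ← hc]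
        field_simp
end

section
/- Let (Y, d) be a metric space and V : ℝ → Y a map. Suppose that the functions t ↦ d(V(0), V(t)) and t ↦ d(V(t), V(1)) are convex on the interval [0, 1]. Then for every t ∈ [0, 1], d(V(0), V(t)) = t·d(V(0), V(1)) and d(V(t), V(1)) = (1 − t)·d(V(0), V(1)). -/
/-- If `t ↦ d(V 0, V t)` and `t ↦ d(V t, V 1)` are convex on `[0,1]`, then
`d(V 0, V t) = t d(V 0, V 1)` and `d(V t, V 1) = (1 − t) d(V 0, V 1)` on `[0,1]`. -/
theorem dist_eq_of_convex {Y : Type*} [MetricSpace Y] (V : ℝ → Y)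
    (h0 : ConvexOn ℝ (Set.Icc (0 : ℝ) 1) (fun t => dist (V 0) (V t)))
    (h1 : ConvexOn ℝ (Set.Icc (0 : ℝ) 1) (fun t => dist (V t) (V 1))) :
    ∀ t ∈ Set.Icc (0 : ℝ) 1,
      dist (V 0) (V t) = t * dist (V 0) (V 1) ∧
      dist (V t) (V 1) = (1 - t) * dist (V 0) (V 1) := by
  intro t ht
  obtain ⟨ht0, ht1⟩ := ht
  have mem0 : (0:ℝ) ∈ Set.Icc (0:ℝ) 1 := by constructor <;> norm_num
  have mem1 : (1:ℝ) ∈ Set.Icc (0:ℝ) 1 := by constructor <;> norm_num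
  have hconv0 := h0.2 mem0 mem1 (by linarith : (0:ℝ) ≤ 1 - t) ht0 (by ring)
  have hconv1 := h1.2 mem0 mem1 (by linarith : (0:ℝ) ≤ 1 - t) ht0 (by ring)
  simp only [smul_eq_mul, mul_zero, mul_one, zero_add, dist_self] at hconv0 hconv1
  have hc0 : dist (V 0) (V ((1 - t) * 0 + t * 1)) ≤ t * dist (V 0) (V 1) := by
    simpa using hconv0
  have hc1 : dist (V ((1 - t) * 0 + t * 1)) (V 1) ≤ (1 - t) * dist (V 0) (V 1) := by
    simpa using hconv1
  have ht' : (1 - t) * 0 + t * 1 = t := by ring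
  rw [ht'] at hc0 hc1
  have htri := dist_triangle (V 0) (V t) (V 1)
  constructor <;> linarith
end

section
/- Let (Y, d) be a metric space and V : ℝ → Y a map. Suppose that for every a ∈ [0, 1] the function t ↦ d(V(a), V(t)) is convex on the interval [0, 1]. Then for all s, t ∈ [0, 1], d(V(s), V(t)) = |s − t|·d(V(0), V(1)). -/
/-- A curve `V` such that for each `a ∈ [0,1]` the function `t ↦ d(V a, V t)` is
convex on `[0,1]` is a constant-speed geodesic:
`d(V s, V t) = |s − t| d(V 0, V 1)` for `s, t ∈ [0,1]`. -/
theorem geodesic_of_convex_dist {Y : Type*} [MetricSpace Y] (V : ℝ → Y)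
    (h : ∀ a ∈ Set.Icc (0 : ℝ) 1,
      ConvexOn ℝ (Set.Icc (0 : ℝ) 1) (fun t => dist (V a) (V t))) :
    ∀ s ∈ Set.Icc (0 : ℝ) 1, ∀ t ∈ Set.Icc (0 : ℝ) 1,
      dist (V s) (V t) = |s - t| * dist (V 0) (V 1) := by
  have h0 : (0:ℝ) ∈ Set.Icc (0:ℝ) 1 := by norm_num
  have h1 : (1:ℝ) ∈ Set.Icc (0:ℝ) 1 := by norm_num
  set D := dist (V 0) (V 1) with hD
  -- generic convexity bound
  have conv : ∀ a ∈ Set.Icc (0:ℝ) 1, ∀ x ∈ Set.Icc (0:ℝ) 1, ∀ y ∈ Set.Icc (0:ℝ) 1,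
      ∀ μ : ℝ, 0 ≤ μ → μ ≤ 1 →
      dist (V a) (V ((1-μ)*x + μ*y)) ≤ (1-μ) * dist (V a) (V x) + μ * dist (V a) (V y) := by
    intro a ha x hx y hy μ hμ0 hμ1
    have := (h a ha).2 hx hy (by linarith : (0:ℝ) ≤ 1 - μ) hμ0 (by ring)
    simpa [smul_eq_mul] using this
  have ub0 : ∀ t ∈ Set.Icc (0:ℝ) 1, dist (V 0) (V t) ≤ t * D := by
    intro t ht
    have := conv 0 h0 0 h0 1 h1 t ht.1 ht.2
    simpa [dist_self] using this
  have ub1 : ∀ t ∈ Set.Icc (0:ℝ) 1, dist (V 1) (V t) ≤ (1 - t) * D := by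
    intro t ht
    have := conv 1 h1 0 h0 1 h1 t ht.1 ht.2
    simp [dist_self] at this
    calc dist (V 1) (V t) = dist (V 1) (V ((1-t)*0 + t*1)) := by norm_num
    _ ≤ (1-t) * dist (V 1) (V 0) := by simpa [dist_self] using conv 1 h1 0 h0 1 h1 t ht.1 ht.2
    _ = (1-t) * D := by rw [dist_comm]
  have eq0 : ∀ t ∈ Set.Icc (0:ℝ) 1, dist (V 0) (V t) = t * D := by
    intro t ht
    have tri : D ≤ dist (V 0) (V t) + dist (V 1) (V t) := by
      rw [hD]; rw [dist_comm (V 1) (V t)]; exact dist_triangle _ _ _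
    have := ub0 t ht
    have := ub1 t ht
    linarith
  have eq1 : ∀ t ∈ Set.Icc (0:ℝ) 1, dist (V 1) (V t) = (1 - t) * D := by
    intro t ht
    have tri : D ≤ dist (V 0) (V t) + dist (V 1) (V t) := by
      rw [hD]; rw [dist_comm (V 1) (V t)]; exact dist_triangle _ _ _
    have := ub0 t ht
    have := ub1 t ht
    linarith
  -- main claim for s ≤ t
  have main : ∀ s ∈ Set.Icc (0:ℝ) 1, ∀ t ∈ Set.Icc (0:ℝ) 1, s ≤ t →
      dist (V s) (V t) = (t - s) * D := by
    intro s hs t ht hst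
    rcases eq_or_lt_of_le hs.2 with hs1 | hs1
    · -- s = 1, so t = 1
      have : t = 1 := le_antisymm ht.2 (hs1 ▸ hst)
      rw [this, ← hs1]
      simp [dist_self]
    · -- s < 1
      have hden : (0:ℝ) < 1 - s := by linarith
      set μ : ℝ := (t - s) / (1 - s) with hμ
      have hμ0 : 0 ≤ μ := div_nonneg (by linarith) (by linarith)
      have hμ1 : μ ≤ 1 := by
        rw [hμ, div_le_one hden]; linarith [ht.2]
      have hpt : (1-μ)*s + μ*1 = t := by
        rw [hμ]; field_simp; ring
      have ub : dist (V s) (V t) ≤ (t - s) * D := by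
        have := conv s hs s hs 1 h1 μ hμ0 hμ1
        rw [hpt, dist_self] at this
        have hs1d : dist (V s) (V 1) = (1 - s) * D := by
          rw [dist_comm]; exact eq1 s hs
        rw [hs1d] at this
        calc dist (V s) (V t) ≤ (1-μ)*0 + μ * ((1-s)*D) := this
        _ = (t - s) * D := by rw [hμ]; field_simp; ring
      have lb : (t - s) * D ≤ dist (V s) (V t) := by
        have tri : D ≤ dist (V 0) (V s) + dist (V s) (V t) + dist (V 1) (V t) := by
          rw [hD, dist_comm (V 1) (V t)]
          calc dist (V 0) (V 1) ≤ dist (V 0) (V t) + dist (V t) (V 1) := dist_triangle _ _ _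
          _ ≤ dist (V 0) (V s) + dist (V s) (V t) + dist (V t) (V 1) := by
              linarith [dist_triangle (V 0) (V s) (V t)]
        rw [eq0 s hs, eq1 t ht] at tri
        linarith
      linarith
  intro s hs t ht
  rcases le_total s t with hst | hst
  · rw [abs_of_nonpos (by linarith), main s hs t ht hst]; ring_nf
  · rw [abs_of_nonneg (by linarith), dist_comm, main t ht s hs hst]
end
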